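/- arXiv:2605.23318 — 6 statements merged into one kernel-verified Lean document; each statement's English description precedes it below -/
import Mathlib

section
/- Let n ≥ 1, p ≥ 1, let (X_i, Y_i) ∈ ℝ^p × ℝ, i = 1,…,n, be arbitrary data points, and let the score vector a(1),…,a(n) ∈ ℝ be nondecreasing, i.e., a(1) ≤ a(2) ≤ ⋯ ≤ a(n). Then the generalized rank regression loss L : ℝ^p → ℝ is a convex function. -/
open scoped RealInnerProductSpace

/-- The generalized rank regression loss: residuals `Y i - ⟪X i, β⟫` are sorted in
nondecreasing order and weighted by the scores `a i`. -/
noncomputable def GRRLoss {n p : ℕ} (X : Fin n → EuclideanSpace ℝ (Fin p))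
    (Y : Fin n → ℝ) (a : Fin n → ℝ) (β : EuclideanSpace ℝ (Fin p)) : ℝ :=
  ∑ i : Fin n,
    a i * ((fun j : Fin n => Y j - ⟪X j, β⟫) ∘
      Tuple.sort (fun j : Fin n => Y j - ⟪X j, β⟫)) i

private lemma convexOn_sup' {E : Type*} [AddCommMonoid E] [Module ℝ E]
    {ι : Type*} {s : Finset ι} (hs : s.Nonempty) {f : ι → E → ℝ}
    (hf : ∀ i ∈ s, ConvexOn ℝ Set.univ (f i)) :
    ConvexOn ℝ Set.univ (fun x => s.sup' hs (fun i => f i x)) := by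
  induction hs using Finset.Nonempty.cons_induction with
  | singleton i =>
      exact hf i (by simp)
  | cons i s his hs ih =>
      simp only [Finset.sup'_cons hs]
      exact (hf i (by simp)).sup
        (ih (fun j hj => hf j (Finset.mem_cons_of_mem hj)))

private lemma affine_convex {n p : ℕ} (X : Fin n → EuclideanSpace ℝ (Fin p))
    (Y : Fin n → ℝ) (a : Fin n → ℝ) (σ : Equiv.Perm (Fin n)) :
    ConvexOn ℝ Set.univ (fun β : EuclideanSpace ℝ (Fin p) =>
      ∑ i : Fin n, a i * (Y (σ i) - ⟪X (σ i), β⟫)) := by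
  refine ⟨convex_univ, fun x _ y _ s t hs ht hst => le_of_eq ?_⟩
  rw [Finset.smul_sum, Finset.smul_sum, ← Finset.sum_add_distrib]
  refine Finset.sum_congr rfl fun i _ => ?_
  simp only [inner_add_right, inner_smul_right, smul_eq_mul]
  linear_combination (-(a i * Y (σ i))) * hst

/-- Sufficiency direction of Proposition 1: if the score vector is nondecreasing,
then the GRR loss is convex. -/
theorem grr_loss_convex_of_monotone_score {n p : ℕ} (hn : 1 ≤ n) (hp : 1 ≤ p)
    (X : Fin n → EuclideanSpace ℝ (Fin p)) (Y : Fin n → ℝ)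
    (a : Fin n → ℝ) (ha : Monotone a) :
    ConvexOn ℝ Set.univ (GRRLoss X Y a) := by
  have hne : (Finset.univ : Finset (Equiv.Perm (Fin n))).Nonempty := Finset.univ_nonempty
  have key : GRRLoss X Y a = fun β => Finset.univ.sup' hne
      (fun σ : Equiv.Perm (Fin n) => ∑ i : Fin n, a i * (Y (σ i) - ⟪X (σ i), β⟫)) := by
    funext β
    set z : Fin n → ℝ := fun j => Y j - ⟪X j, β⟫ with hz
    set τ := Tuple.sort z with hτ
    apply le_antisymm
    · exact Finset.le_sup' (f := fun σ : Equiv.Perm (Fin n) =>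
        ∑ i : Fin n, a i * (Y (σ i) - ⟪X (σ i), β⟫)) (Finset.mem_univ τ)
    · refine Finset.sup'_le _ _ fun σ _ => ?_
      have hmono : Monovary a (z ∘ τ) := ha.monovary (Tuple.monotone_sort z)
      have := hmono.sum_mul_comp_perm_le_sum_mul (σ := τ⁻¹ * σ)
      simpa [GRRLoss, hz, hτ, Function.comp, Equiv.Perm.mul_apply] using this
  rw [key]
  exact convexOn_sup' hne fun σ _ => affine_convex X Y a σ
end

section
/- Let n ≥ 2 and suppose the score vector a(1),…,a(n) ∈ ℝ is not nondecreasing, i.e., there exist indices i < j with a(i) > a(j). Then for every p ≥ 1 there exist data points (X_1, Y_1),…,(X_n, Y_n) ∈ ℝ^p × ℝ such that the generalized rank regression loss L : ℝ^p → ℝ is not convex. -/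
open scoped RealInnerProductSpace

-- aux: monotone from bounds
lemma mono_of_bounds {n : ℕ} (h : Fin n → ℝ)
    (hb : ∀ k : Fin n, ((k : ℕ) : ℝ) - 1/2 ≤ h k ∧ h k ≤ ((k : ℕ) : ℝ) + 1/2) :
    Monotone h := by
  refine monotone_iff_forall_lt.2 fun j k hjk => ?_
  have hjk' : (j : ℕ) + 1 ≤ (k : ℕ) := hjk
  have : ((j : ℕ) : ℝ) + 1 ≤ ((k : ℕ) : ℝ) := by exact_mod_cast hjk'
  have h1 := (hb j).2
  have h2 := (hb k).1
  linarith

-- aux: descent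
lemma exists_descent {n : ℕ} (a : Fin n → ℝ)
    (ha : ∃ i j : Fin n, i < j ∧ a j < a i) :
    ∃ m : Fin n, ∃ h : (m : ℕ) + 1 < n, a ⟨(m : ℕ) + 1, h⟩ < a m := by
  by_contra hc
  push_neg at hc
  obtain ⟨i, j, hij, haij⟩ := ha
  cases n with
  | zero => exact absurd i.2 (by omega)
  | succ n' =>
    have hmono : Monotone a := by
      refine Fin.monotone_iff_le_succ.2 fun k => ?_
      have hk : (k.castSucc : ℕ) + 1 < n' + 1 := by
        simp
      have := hc k.castSucc hk
      exact this
    exact absurd (hmono hij.le) (not_le.2 haij)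

/-- Necessity direction of Proposition 1: if the score vector is not nondecreasing,
then for every dimension `p ≥ 1` there are data points making the GRR loss non-convex. -/
theorem grr_loss_nonconvex_of_nonmonotone_score {n : ℕ} (hn : 2 ≤ n)
    (a : Fin n → ℝ) (ha : ∃ i j : Fin n, i < j ∧ a j < a i) :
    ∀ p : ℕ, 1 ≤ p →
      ∃ (X : Fin n → EuclideanSpace ℝ (Fin p)) (Y : Fin n → ℝ),
        ¬ ConvexOn ℝ Set.univ (GRRLoss X Y a) := by
  intro p hp
  obtain ⟨m, hm1, hdesc⟩ := exists_descent a ha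
  set m' : Fin n := ⟨(m : ℕ) + 1, hm1⟩ with hm'def
  have hmm' : m ≠ m' := by
    intro h
    have : (m : ℕ) = (m : ℕ) + 1 := congrArg Fin.val h
    omega
  set z : Fin p := ⟨0, hp⟩ with hz
  set e : EuclideanSpace ℝ (Fin p) := EuclideanSpace.single z 1 with he
  set X : Fin n → EuclideanSpace ℝ (Fin p) :=
    fun k => if k = m then e else if k = m' then -e else 0 with hX
  set Y : Fin n → ℝ :=
    fun k => if k = m ∨ k = m' then ((m : ℕ) : ℝ) + 1/2 else ((k : ℕ) : ℝ) with hY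
  refine ⟨X, Y, ?_⟩
  -- residual at t • e
  have hee : ⟪e, e⟫ = (1 : ℝ) := by
    simp [he, EuclideanSpace.inner_single_left]
  have hA : ∀ t : ℝ, ⟪e, t • e⟫ = t := fun t => by
    rw [real_inner_smul_right, hee, mul_one]
  have hB : ∀ t : ℝ, ⟪-e, t • e⟫ = -t := fun t => by
    rw [inner_neg_left, hA]
  have hres : ∀ t : ℝ, (fun j : Fin n => Y j - ⟪X j, t • e⟫) =
      fun k : Fin n => if k = m then ((m : ℕ) : ℝ) + 1/2 - t
        else if k = m' then ((m : ℕ) : ℝ) + 1/2 + t else ((k : ℕ) : ℝ) := by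
    intro t
    funext k
    by_cases h1 : k = m
    · subst h1; simp [hX, hY, hA]
    · by_cases h2 : k = m'
      · subst h2; simp [hX, hY, hB, Ne.symm hmm', h1]
      · simp [hX, hY, h1, h2]

  set g : ℝ → Fin n → ℝ := fun t k => if k = m then ((m : ℕ) : ℝ) + 1/2 - t
    else if k = m' then ((m : ℕ) : ℝ) + 1/2 + t else ((k : ℕ) : ℝ) with hg
  have hm'val : ((m' : ℕ) : ℝ) = ((m : ℕ) : ℝ) + 1 := by
    simp [hm'def]
  have hgmono : ∀ t : ℝ, 0 ≤ t → t ≤ 1/2 → Monotone (g t) := by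
    intro t ht0 ht1
    apply mono_of_bounds
    intro k
    by_cases h1 : k = m
    · subst h1; simp only [hg, if_pos rfl]; constructor <;> linarith
    · by_cases h2 : k = m'
      · subst h2
        constructor <;> simp [hg, hm'val, Ne.symm hmm'] <;> linarith
      · simp only [hg, if_neg h1, if_neg h2]
        constructor <;> linarith
  have hswap : g (-(1/4)) ∘ (Equiv.swap m m') = g (1/4) := by
    funext k
    by_cases h1 : k = m
    · subst h1
      simp [hg, Equiv.swap_apply_left, Ne.symm hmm', hmm'] <;> ring
    · by_cases h2 : k = m'
      · subst h2
        simp [hg, Equiv.swap_apply_right, Ne.symm hmm', hmm'] <;> ring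
      · simp [hg, Equiv.swap_apply_of_ne_of_ne h1 h2, h1, h2]
  have hL : ∀ (t : ℝ) (σ : Equiv.Perm (Fin n)), Monotone (g t ∘ σ) →
      GRRLoss X Y a (t • e) = ∑ i : Fin n, a i * (g t ∘ σ) i := by
    intro t σ hmon
    have hsort : g t ∘ σ = g t ∘ Tuple.sort (g t) :=
      Tuple.comp_sort_eq_comp_iff_monotone.2 hmon
    simp only [GRRLoss, hres t]
    exact (congrArg (fun f => ∑ i : Fin n, a i * f i) hsort).symm
  have hmono4 : Monotone (g (1/4)) := hgmono _ (by norm_num) (by norm_num)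
  have hmono0 : Monotone (g 0) := hgmono _ le_rfl (by norm_num)
  have hL4 : GRRLoss X Y a ((1/4 : ℝ) • e) = ∑ i : Fin n, a i * g (1/4) i := by
    have := hL (1/4) (Equiv.refl _) (by simpa using hmono4)
    simpa using this
  have hL0 : GRRLoss X Y a ((0 : ℝ) • e) = ∑ i : Fin n, a i * g 0 i := by
    have := hL 0 (Equiv.refl _) (by simpa using hmono0)
    simpa using this
  have hLm4 : GRRLoss X Y a ((-(1/4) : ℝ) • e) = ∑ i : Fin n, a i * g (1/4) i := by
    have := hL (-(1/4)) (Equiv.swap m m') (by rw [hswap]; exact hmono4)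
    rw [this, hswap]
  have hdiff : (∑ i : Fin n, a i * g (1/4) i) - (∑ i : Fin n, a i * g 0 i)
      = (a m' - a m) * (1/4) := by
    rw [← Finset.sum_sub_distrib]
    have hterm : ∀ i : Fin n, a i * g (1/4) i - a i * g 0 i =
        (if i = m then a m * (-(1/4)) else 0) + (if i = m' then a m' * (1/4) else 0) := by
      intro i
      by_cases h1 : i = m
      · subst h1
        simp [hg, Ne.symm hmm', hmm']
        ring
      · by_cases h2 : i = m'
        · subst h2
          simp [hg, Ne.symm hmm', h1]
          ring
        · simp [hg, h1, h2]
    rw [Finset.sum_congr rfl fun i _ => hterm i, Finset.sum_add_distrib]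
    simp [Finset.sum_ite_eq']
    ring
  intro hconv
  have hmid : (1/2 : ℝ) • ((1/4 : ℝ) • e) + (1/2 : ℝ) • ((-(1/4) : ℝ) • e)
      = (0 : ℝ) • e := by
    rw [smul_smul, smul_smul, ← add_smul]
    norm_num
  have hineq := hconv.2 (Set.mem_univ ((1/4 : ℝ) • e)) (Set.mem_univ ((-(1/4) : ℝ) • e))
    (by norm_num : (0:ℝ) ≤ 1/2) (by norm_num : (0:ℝ) ≤ 1/2) (by norm_num : (1/2 : ℝ) + 1/2 = 1)
  rw [hmid, hL0, hL4, hLm4] at hineq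
  simp only [smul_eq_mul] at hineq
  linarith
end

section
/- Let φ : [0,1] → ℝ be continuously differentiable. Then ∫₀¹∫₀¹ (min(u,v) − u·v)·φ′(u)·φ′(v) du dv = ∫₀¹ φ(u)² du − (∫₀¹ φ(u) du)². In particular, if ∫₀¹ φ(u) du = 0 and ∫₀¹ φ(u)² du = 1, then ∫₀¹∫₀¹ min(u,v)·(1 − max(u,v))·φ′(u)·φ′(v) du dv = 1. -/
/-- Brownian-bridge covariance identity (numerator computation in the proof of
Proposition 3): for continuously differentiable `φ`,
`∫₀¹∫₀¹ (min(u,v) − uv) φ'(u) φ'(v) du dv = ∫₀¹ φ² − (∫₀¹ φ)²`; in particular, under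
the normalization `∫₀¹ φ = 0`, `∫₀¹ φ² = 1`, the quadratic form with kernel
`min(u,v)(1 − max(u,v))` equals `1`. -/
theorem brownian_bridge_quadratic_form (φ : ℝ → ℝ) (hφ : ContDiff ℝ 1 φ) :
    (∫ u in (0:ℝ)..1, ∫ v in (0:ℝ)..1,
        (min u v - u * v) * deriv φ u * deriv φ v)
      = (∫ u in (0:ℝ)..1, (φ u) ^ 2) - (∫ u in (0:ℝ)..1, φ u) ^ 2 ∧
    ((∫ u in (0:ℝ)..1, φ u) = 0 → (∫ u in (0:ℝ)..1, (φ u) ^ 2) = 1 →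
      (∫ u in (0:ℝ)..1, ∫ v in (0:ℝ)..1,
          min u v * (1 - max u v) * deriv φ u * deriv φ v) = 1) := by
  set f := deriv φ with hf_def
  have hfc : Continuous f := hφ.continuous_deriv le_rfl
  have hφc : Continuous φ := hφ.continuous
  have hd : ∀ x : ℝ, HasDerivAt φ (f x) x := fun x =>
    ((hφ.differentiable one_ne_zero) x).hasDerivAt
  set C := ∫ u in (0:ℝ)..1, φ u with hC
  -- inner integral computation
  have inner : ∀ u ∈ Set.Icc (0:ℝ) 1,
      (∫ v in (0:ℝ)..1, (min u v - u * v) * f v)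
        = u * C - ∫ t in (0:ℝ)..u, φ t := by
    intro u hu
    obtain ⟨hu0, hu1⟩ := hu
    have hgc : Continuous (fun v => (min u v - u * v) * f v) :=
      ((continuous_const.min continuous_id).sub (continuous_const.mul continuous_id)).mul hfc
    have hsplit : (∫ v in (0:ℝ)..u, (min u v - u * v) * f v)
        + (∫ v in u..1, (min u v - u * v) * f v)
        = ∫ v in (0:ℝ)..1, (min u v - u * v) * f v :=
      intervalIntegral.integral_add_adjacent_intervals
        (hgc.intervalIntegrable _ _) (hgc.intervalIntegrable _ _)
    have h1 : (∫ v in (0:ℝ)..u, (min u v - u * v) * f v)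
        = (1 - u) * (u * φ u - ∫ t in (0:ℝ)..u, φ t) := by
      have heq : Set.EqOn (fun v => (min u v - u * v) * f v)
          (fun v => (1 - u) * (v * f v)) (Set.uIcc 0 u) := by
        intro v hv
        rw [Set.uIcc_of_le hu0] at hv
        have hm : min u v = v := min_eq_right hv.2
        simp only [hm]; ring
      rw [intervalIntegral.integral_congr heq, intervalIntegral.integral_const_mul]
      have hparts : ∫ v in (0:ℝ)..u, v * f v
          = u * φ u - 0 * φ 0 - ∫ v in (0:ℝ)..u, 1 * φ v :=
        intervalIntegral.integral_mul_deriv_eq_deriv_mul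
          (fun x _ => hasDerivAt_id x) (fun x _ => hd x)
          intervalIntegrable_const (hfc.intervalIntegrable _ _)
      rw [hparts]
      simp only [one_mul, zero_mul, sub_zero]
    have h2 : (∫ v in u..1, (min u v - u * v) * f v)
        = u * (-(1 - u) * φ u + ∫ t in u..1, φ t) := by
      have heq : Set.EqOn (fun v => (min u v - u * v) * f v)
          (fun v => u * ((1 - v) * f v)) (Set.uIcc u 1) := by
        intro v hv
        rw [Set.uIcc_of_le hu1] at hv
        have hm : min u v = u := min_eq_left hv.1
        simp only [hm]; ring
      rw [intervalIntegral.integral_congr heq, intervalIntegral.integral_const_mul]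
      have hparts : ∫ v in u..1, (1 - v) * f v
          = (1 - 1) * φ 1 - (1 - u) * φ u - ∫ v in u..1, (-1) * φ v :=
        intervalIntegral.integral_mul_deriv_eq_deriv_mul
          (fun x _ => (hasDerivAt_id x).const_sub 1) (fun x _ => hd x)
          intervalIntegrable_const (hfc.intervalIntegrable _ _)
      rw [hparts]
      rw [intervalIntegral.integral_const_mul]
      ring
    have hAB : (∫ t in (0:ℝ)..u, φ t) + (∫ t in u..1, φ t) = ∫ t in (0:ℝ)..1, φ t :=
      intervalIntegral.integral_add_adjacent_intervals
        (hφc.intervalIntegrable _ _) (hφc.intervalIntegrable _ _)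
    rw [← hC] at hAB
    rw [← hsplit, h1, h2, ← hAB]
    ring
  -- outer integrand simplification
  have outer_eq : Set.EqOn
      (fun u => ∫ v in (0:ℝ)..1, (min u v - u * v) * f u * f v)
      (fun u => (u * C - ∫ t in (0:ℝ)..u, φ t) * f u) (Set.uIcc 0 1) := by
    intro u hu
    rw [Set.uIcc_of_le (by norm_num : (0:ℝ) ≤ 1)] at hu
    have hpull : (∫ v in (0:ℝ)..1, (min u v - u * v) * f u * f v)
        = f u * ∫ v in (0:ℝ)..1, (min u v - u * v) * f v := by
      rw [← intervalIntegral.integral_const_mul]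
      apply intervalIntegral.integral_congr
      intro v _
      ring
    simp only [hpull, inner u hu]
    ring
  -- derivative of G
  have hG : ∀ x : ℝ, HasDerivAt (fun u => u * C - ∫ t in (0:ℝ)..u, φ t) (C - φ x) x := by
    intro x
    have h1 : HasDerivAt (fun u : ℝ => u * C) C x := by
      simpa using (hasDerivAt_id x).mul_const C
    have h2 : HasDerivAt (fun u => ∫ t in (0:ℝ)..u, φ t) (φ x) x :=
      intervalIntegral.integral_hasDerivAt_right (hφc.intervalIntegrable _ _)
        (hφc.stronglyMeasurableAtFilter _ _) hφc.continuousAt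
    exact h1.sub h2
  have main1 : (∫ u in (0:ℝ)..1, ∫ v in (0:ℝ)..1,
        (min u v - u * v) * f u * f v)
      = (∫ u in (0:ℝ)..1, (φ u) ^ 2) - C ^ 2 := by
    rw [intervalIntegral.integral_congr outer_eq]
    have hparts : ∫ u in (0:ℝ)..1, (u * C - ∫ t in (0:ℝ)..u, φ t) * f u
        = ((1:ℝ) * C - ∫ t in (0:ℝ)..1, φ t) * φ 1
          - ((0:ℝ) * C - ∫ t in (0:ℝ)..0, φ t) * φ 0
          - ∫ u in (0:ℝ)..1, (C - φ u) * φ u :=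
      intervalIntegral.integral_mul_deriv_eq_deriv_mul
        (fun x _ => hG x) (fun x _ => hd x)
        (((continuous_const.sub hφc).intervalIntegrable _ _))
        (hfc.intervalIntegrable _ _)
    rw [hparts]
    have hsub : (∫ u in (0:ℝ)..1, (C - φ u) * φ u)
        = (∫ u in (0:ℝ)..1, C * φ u) - ∫ u in (0:ℝ)..1, (φ u) ^ 2 := by
      rw [← intervalIntegral.integral_sub (f := fun u => C * φ u) (g := fun u => φ u ^ 2) ((continuous_const.mul hφc).intervalIntegrable _ _)
        ((hφc.pow 2).intervalIntegrable _ _)]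
      apply intervalIntegral.integral_congr
      intro x _
      ring
    rw [hsub, intervalIntegral.integral_const_mul, ← hC,
      intervalIntegral.integral_same]
    ring
  refine ⟨main1, ?_⟩
  intro h0 h1
  have keq : Set.EqOn
      (fun u => ∫ v in (0:ℝ)..1, min u v * (1 - max u v) * f u * f v)
      (fun u => ∫ v in (0:ℝ)..1, (min u v - u * v) * f u * f v) (Set.uIcc 0 1) := by
    intro u _
    apply intervalIntegral.integral_congr
    intro v _
    have h := min_mul_max u v
    linear_combination (-(f u * f v)) * h
  rw [intervalIntegral.integral_congr keq, main1, h1, hC.trans h0]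
  norm_num
end

section
/- Let φ : [0,1] → ℝ be continuously differentiable with ∫₀¹ φ(u) du = 0 and ∫₀¹ φ(u)² du = 1. Let f be a positive, bounded, continuously differentiable probability density on ℝ with strictly increasing cumulative distribution function F, f(x) → 0 as x → ±∞, f′ integrable, and assume c_H(φ) = −∫_ℝ φ(F(x)) f′(x) dx > 0. For each integer K ≥ 2 set τ_i = i/K for i = 1,…,K−1 and weights w_i = φ(i/K) − φ((i−1)/K). Then the composite-quantile-regression variance factor V_K := [ Σ_{i,j=1}^{K−1} w_i w_j · min(τ_i,τ_j)·(1 − max(τ_i,τ_j)) ] / [ Σ_{i=1}^{K−1} w_i · f(F⁻¹(τ_i)) ]² converges to 1/c_H(φ)² as K → ∞. -/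
open MeasureTheory Filter Set Topology

lemma riemann_tagged_tendsto (p q : ℝ → ℝ) (hp : Continuous p) (hq : Continuous q)
    (t : ℕ → ℕ → ℝ)
    (ht : ∀ (K i : ℕ), i ∈ Finset.Icc 1 (K-1) → t K i ∈ Icc (((i:ℝ)-1)/K) ((i:ℝ)/K)) :
    Tendsto (fun K : ℕ => ∑ i ∈ Finset.Icc 1 (K-1),
      (∫ u in (((i:ℝ)-1)/K)..((i:ℝ)/K), p u) * q (t K i)) atTop
      (𝓝 (∫ u in (0:ℝ)..1, p u * q u)) := by
  obtain ⟨Mp, hMp⟩ := (isCompact_Icc (a := (0:ℝ)) (b := 1)).exists_bound_of_continuousOn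
    hp.continuousOn
  obtain ⟨Mq, hMq⟩ := (isCompact_Icc (a := (0:ℝ)) (b := 1)).exists_bound_of_continuousOn
    hq.continuousOn
  have hMp0 : 0 ≤ Mp := le_trans (norm_nonneg _) (hMp 0 (by norm_num))
  have hMq0 : 0 ≤ Mq := le_trans (norm_nonneg _) (hMq 0 (by norm_num))
  rw [Metric.tendsto_atTop]
  intro ε hε
  have hε'pos : 0 < ε / (2*(Mp+1)) := by positivity
  set ε' := ε / (2*(Mp+1)) with hε'def
  have huc := (isCompact_Icc (a := (0:ℝ)) (b := 1)).uniformContinuousOn_of_continuous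
    hq.continuousOn
  rw [Metric.uniformContinuousOn_iff] at huc
  obtain ⟨δ, hδ, hδq⟩ := huc ε' hε'pos
  obtain ⟨N1, hN1⟩ := exists_nat_gt (1/δ)
  obtain ⟨N2, hN2⟩ := exists_nat_gt (2*(Mp*Mq+1)/ε)
  refine ⟨max N1 N2 + 1, fun K hK => ?_⟩
  have hKN1 : (N1 : ℝ) < K := by
    have : N1 < K := lt_of_lt_of_le (Nat.lt_succ_of_le (le_max_left _ _)) hK
    exact_mod_cast this
  have hKN2 : (N2 : ℝ) < K := by
    have : N2 < K := lt_of_lt_of_le (Nat.lt_succ_of_le (le_max_right _ _)) hK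
    exact_mod_cast this
  have hK0 : 0 < K := lt_of_le_of_lt (Nat.zero_le _) (lt_of_lt_of_le (Nat.lt_succ_of_le (le_max_left _ _)) hK)
  have hKR : (0:ℝ) < K := by exact_mod_cast hK0
  have hinvKδ : 1/(K:ℝ) < δ := by
    have h1 : 1/δ < (K:ℝ) := hN1.trans hKN1
    rw [div_lt_iff₀ hδ] at h1
    rw [div_lt_iff₀ hKR]
    linarith
  -- reindex the sum over Icc 1 (K-1) to range (K-1)
  have hIcc : Finset.Icc 1 (K-1) = Finset.Ico 1 K := by
    rw [← Finset.Ico_add_one_right_eq_Icc]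
    congr 1
    omega
  have hre : ∀ (g : ℕ → ℝ), ∑ i ∈ Finset.Icc 1 (K-1), g i = ∑ j ∈ Finset.range (K-1), g (1+j) := by
    intro g
    rw [hIcc, Finset.sum_Ico_eq_sum_range]
  set S := ∑ i ∈ Finset.Icc 1 (K-1),
      (∫ u in (((i:ℝ)-1)/K)..((i:ℝ)/K), p u) * q (t K i) with hSdef
  have hS : S = ∑ j ∈ Finset.range (K-1),
      (∫ u in ((j:ℝ)/K)..(((j:ℝ)+1)/K), p u) * q (t K (1+j)) := by
    rw [hSdef, hre]
    refine Finset.sum_congr rfl fun j hj => ?_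
    have h1 : (((1+j:ℕ):ℝ)-1)/K = (j:ℝ)/K := by push_cast; ring_nf
    have h2 : ((1+j:ℕ):ℝ)/K = ((j:ℝ)+1)/K := by push_cast; ring_nf
    rw [h1, h2]
  -- bounds for indices
  have hjmem : ∀ j ∈ Finset.range (K-1), (0:ℝ) ≤ (j:ℝ)/K ∧ ((j:ℝ)+1)/K ≤ 1 := by
    intro j hj
    rw [Finset.mem_range] at hj
    constructor
    · positivity
    · rw [div_le_one hKR]
      have : (j:ℝ) + 1 ≤ (K:ℝ) := by
        have : j + 1 ≤ K := by omega
        exact_mod_cast this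
      linarith
  -- adjacent intervals
  have hadj : ∑ j ∈ Finset.range (K-1),
      (∫ u in ((j:ℝ)/K)..(((j:ℝ)+1)/K), p u * q u) = ∫ u in (0:ℝ)..(((K-1:ℕ):ℝ)/K), p u * q u := by
    have := intervalIntegral.sum_integral_adjacent_intervals (a := fun j : ℕ => (j:ℝ)/K)
      (f := fun u => p u * q u) (n := K-1) (μ := volume)
      (fun k _ => (hp.mul hq).intervalIntegrable _ _)
    refine (Finset.sum_congr rfl fun j hj => ?_).trans (by simpa using this)
    have : ((j+1:ℕ):ℝ)/K = ((j:ℝ)+1)/K := by push_cast; ring_nf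
    simp only [this]
  set T := ∫ u in (0:ℝ)..(((K-1:ℕ):ℝ)/K), p u * q u with hTdef
  set I := ∫ u in (0:ℝ)..1, p u * q u with hIdef
  have key : ∀ j ∈ Finset.range (K-1),
      ‖(∫ u in ((j:ℝ)/K)..(((j:ℝ)+1)/K), p u) * q (t K (1+j))
        - ∫ u in ((j:ℝ)/K)..(((j:ℝ)+1)/K), p u * q u‖ ≤ Mp * ε' * (1/K) := by
    intro j hj
    obtain ⟨hj0, hj1⟩ := hjmem j hj
    have hle : (j:ℝ)/K ≤ ((j:ℝ)+1)/K := by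
      gcongr <;> linarith
    have hmem : 1+j ∈ Finset.Icc 1 (K-1) := by
      rw [Finset.mem_range] at hj
      rw [Finset.mem_Icc]
      omega
    have htj := ht K (1+j) hmem
    rw [show (((1+j:ℕ):ℝ)-1)/K = (j:ℝ)/K from by push_cast; ring_nf,
        show ((1+j:ℕ):ℝ)/K = ((j:ℝ)+1)/K from by push_cast; ring_nf] at htj
    have htj01 : t K (1+j) ∈ Icc (0:ℝ) 1 := ⟨le_trans hj0 htj.1, le_trans htj.2 hj1⟩
    have int1 : IntervalIntegrable (fun u => p u * q (t K (1+j))) volume ((j:ℝ)/K) (((j:ℝ)+1)/K) :=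
      (hp.mul continuous_const).intervalIntegrable _ _
    have int2 : IntervalIntegrable (fun u => p u * q u) volume ((j:ℝ)/K) (((j:ℝ)+1)/K) :=
      (hp.mul hq).intervalIntegrable _ _
    rw [← intervalIntegral.integral_mul_const, ← intervalIntegral.integral_sub int1 int2]
    have hbd : ∀ u ∈ uIoc ((j:ℝ)/K) (((j:ℝ)+1)/K),
        ‖p u * q (t K (1+j)) - p u * q u‖ ≤ Mp * ε' := by
      intro u hu
      rw [uIoc_of_le hle] at hu
      have hu01 : u ∈ Icc (0:ℝ) 1 := ⟨le_trans hj0 hu.1.le, le_trans hu.2 hj1⟩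
      have hdist : dist (t K (1+j)) u < δ := by
        have h1 : dist (t K (1+j)) u ≤ ((j:ℝ)+1)/K - (j:ℝ)/K :=
          Real.dist_le_of_mem_Icc htj ⟨hu.1.le, hu.2⟩
        have h2 : ((j:ℝ)+1)/K - (j:ℝ)/K = 1/K := by field_simp; ring
        rw [h2] at h1
        exact lt_of_le_of_lt h1 hinvKδ
      have hq' : dist (q (t K (1+j))) (q u) < ε' := hδq _ htj01 _ hu01 hdist
      calc ‖p u * q (t K (1+j)) - p u * q u‖ = ‖p u‖ * ‖q (t K (1+j)) - q u‖ := by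
            rw [← norm_mul]; ring_nf
        _ ≤ Mp * ε' := by
            apply mul_le_mul (hMp u hu01) _ (norm_nonneg _) hMp0
            rw [Real.dist_eq] at hq'
            simpa [Real.norm_eq_abs] using hq'.le
    calc ‖∫ u in ((j:ℝ)/K)..(((j:ℝ)+1)/K), (p u * q (t K (1+j)) - p u * q u)‖
        ≤ Mp * ε' * |(((j:ℝ)+1)/K) - (j:ℝ)/K| :=
          intervalIntegral.norm_integral_le_of_norm_le_const hbd
      _ = Mp * ε' * (1/K) := by
          congr 1
          rw [show ((j:ℝ)+1)/K - (j:ℝ)/K = 1/K from by field_simp; ring]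
          exact abs_of_pos (by positivity)
  have hST : ‖S - T‖ ≤ Mp * ε' := by
    rw [hS, ← hadj, ← Finset.sum_sub_distrib]
    calc ‖∑ j ∈ Finset.range (K-1), ((∫ u in ((j:ℝ)/K)..(((j:ℝ)+1)/K), p u) * q (t K (1+j))
          - ∫ u in ((j:ℝ)/K)..(((j:ℝ)+1)/K), p u * q u)‖
        ≤ ∑ j ∈ Finset.range (K-1), (Mp * ε' * (1/K)) :=
          norm_sum_le_of_le _ key
      _ = ((K-1:ℕ):ℝ) * (Mp * ε' * (1/K)) := by
          rw [Finset.sum_const, Finset.card_range, nsmul_eq_mul]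
      _ ≤ Mp * ε' := by
          have h1 : ((K-1:ℕ):ℝ) ≤ (K:ℝ) := by exact_mod_cast Nat.sub_le K 1
          have h3 : ((K-1:ℕ):ℝ) * (Mp * ε' * (1/K)) ≤ (K:ℝ) * (Mp * ε' * (1/K)) :=
            mul_le_mul_of_nonneg_right h1 (by positivity)
          have h4 : (K:ℝ) * (Mp * ε' * (1/K)) = Mp * ε' := by field_simp
          linarith
  have hTI : ‖T - I‖ ≤ Mp * Mq * (1/K) := by
    have hθ0 : (0:ℝ) ≤ ((K-1:ℕ):ℝ)/K := by positivity
    have hθ1 : ((K-1:ℕ):ℝ)/K ≤ 1 := by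
      rw [div_le_one hKR]
      exact_mod_cast Nat.sub_le K 1
    have hsub : I - T = ∫ u in (((K-1:ℕ):ℝ)/K)..1, p u * q u := by
      rw [hIdef, hTdef]
      exact intervalIntegral.integral_interval_sub_left
        ((hp.mul hq).intervalIntegrable _ _) ((hp.mul hq).intervalIntegrable _ _)
    rw [← norm_neg, neg_sub, hsub]
    calc ‖∫ u in (((K-1:ℕ):ℝ)/K)..1, p u * q u‖ ≤ Mp * Mq * |1 - ((K-1:ℕ):ℝ)/K| := by
          apply intervalIntegral.norm_integral_le_of_norm_le_const
          intro u hu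
          rw [uIoc_of_le hθ1] at hu
          have hu01 : u ∈ Icc (0:ℝ) 1 := ⟨le_trans hθ0 hu.1.le, hu.2⟩
          rw [norm_mul]
          exact mul_le_mul (hMp u hu01) (hMq u hu01) (norm_nonneg _) hMp0
      _ = Mp * Mq * (1 - ((K-1:ℕ):ℝ)/K) := by
          congr 1
          exact abs_of_nonneg (by linarith)
      _ ≤ Mp * Mq * (1/K) := by
          apply mul_le_mul_of_nonneg_left _ (by positivity)
          have : ((K-1:ℕ):ℝ) = (K:ℝ) - 1 := by
            have : (1:ℕ) ≤ K := hK0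
            push_cast [Nat.cast_sub this]
            ring
          rw [this]
          have h5 : 1 - ((K:ℝ)-1)/K = 1/K := by field_simp; ring
          rw [h5]
  have hA : Mp * ε' ≤ ε/2 := by
    rw [hε'def, mul_div_assoc']
    rw [div_le_div_iff₀ (by positivity) (by norm_num)]
    nlinarith [mul_nonneg hMp0 hε.le]
  have hB : Mp * Mq * (1/K) < ε/2 := by
    have h1 : 2*(Mp*Mq+1)/ε < (K:ℝ) := hN2.trans hKN2
    rw [div_lt_iff₀ hε] at h1
    rw [mul_one_div, div_lt_div_iff₀ hKR (by norm_num)]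
    nlinarith
  have := dist_triangle S T I
  rw [Real.dist_eq, Real.dist_eq, Real.dist_eq] at *
  rw [← Real.norm_eq_abs] at *
  calc ‖S - I‖ ≤ ‖S - T‖ + ‖T - I‖ := by
        have h := norm_sub_le_norm_sub_add_norm_sub S T I
        exact h
    _ < ε := by linarith

lemma telescope_Icc (g : ℕ → ℝ) (a b : ℕ) (ha : 1 ≤ a) (hab : a ≤ b) :
    ∑ i ∈ Finset.Icc a b, (g i - g (i-1)) = g b - g (a-1) := by
  induction b, hab using Nat.le_induction with
  | base => simp
  | succ b hab ih =>
      rw [Finset.sum_Icc_succ_top (by omega), ih]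
      have : b + 1 - 1 = b := by omega
      rw [this]
      ring

lemma num_identity (φ : ℝ → ℝ) (K : ℕ) :
    (∑ i ∈ Finset.Icc 1 (K - 1), ∑ j ∈ Finset.Icc 1 (K - 1),
        (φ ((i : ℝ) / K) - φ (((i : ℝ) - 1) / K)) *
          (φ ((j : ℝ) / K) - φ (((j : ℝ) - 1) / K)) *
            (min ((i : ℝ) / K) ((j : ℝ) / K) *
              (1 - max ((i : ℝ) / K) ((j : ℝ) / K))))
    = (1/(K:ℝ)) * (∑ k ∈ Finset.Icc 1 (K-1),
        (φ (((K-1:ℕ):ℝ)/K) - φ (((k:ℝ)-1)/K))^2)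
      - ((1/(K:ℝ)) * ∑ k ∈ Finset.Icc 1 (K-1),
        (φ (((K-1:ℕ):ℝ)/K) - φ (((k:ℝ)-1)/K)))^2 := by
  rcases lt_or_ge K 2 with hK2 | hK2
  · have h0 : K - 1 = 0 := by omega
    simp [h0]
  have hK0 : 0 < K := by omega
  have hKR : (0:ℝ) < K := by exact_mod_cast hK0
  set s := Finset.Icc 1 (K-1) with hsdef
  set w : ℕ → ℝ := fun i => φ ((i:ℝ)/K) - φ (((i:ℝ)-1)/K) with hwdef
  set χ : ℕ → ℕ → ℝ := fun k i => if k ≤ i then 1 else 0 with hχdef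
  set B : ℕ → ℝ := fun k => φ (((K-1:ℕ):ℝ)/K) - φ (((k:ℝ)-1)/K) with hBdef
  -- a_k = B k
  have ha : ∀ k ∈ s, ∑ i ∈ s, w i * χ k i = B k := by
    intro k hk
    rw [hsdef, Finset.mem_Icc] at hk
    have h1 : ∀ i, w i * χ k i = if k ≤ i then w i else 0 := by
      intro i
      by_cases h : k ≤ i <;> simp [hχdef, h]
    simp only [h1]
    rw [← Finset.sum_filter]
    have hfil : s.filter (fun i => k ≤ i) = Finset.Icc k (K-1) := by
      rw [hsdef]
      ext i
      simp only [Finset.mem_filter, Finset.mem_Icc]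
      omega
    rw [hfil]
    have hterm : ∀ i ∈ Finset.Icc k (K-1), w i
        = (fun n : ℕ => φ ((n:ℝ)/K)) i - (fun n : ℕ => φ ((n:ℝ)/K)) (i-1) := by
      intro i hi
      rw [Finset.mem_Icc] at hi
      have h1i : 1 ≤ i := le_trans hk.1 hi.1
      have h2 : ((i:ℝ) - 1) = ((i-1 : ℕ):ℝ) := by
        push_cast [Nat.cast_sub h1i]; ring
      simp only [hwdef, h2]
    rw [Finset.sum_congr rfl hterm, telescope_Icc _ k (K-1) hk.1 hk.2]
    have h2 : ((k-1:ℕ):ℝ) = (k:ℝ)-1 := by push_cast [Nat.cast_sub hk.1]; ring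
    simp only [hBdef, h2]
  -- (i:ℝ) = ∑ χ
  have hi_sum : ∀ i ∈ s, ∑ k ∈ s, χ k i = (i:ℝ) := by
    intro i hi
    rw [hsdef, Finset.mem_Icc] at hi
    simp only [hχdef]
    rw [Finset.sum_boole]
    have hfil : s.filter (fun k => k ≤ i) = Finset.Icc 1 i := by
      rw [hsdef]; ext k
      simp only [Finset.mem_filter, Finset.mem_Icc]
      omega
    rw [hfil, Nat.card_Icc]
    simp
  -- min identity
  have hmin : ∀ i ∈ s, ∀ j ∈ s,
      min ((i:ℝ)/K) ((j:ℝ)/K) * (1 - max ((i:ℝ)/K) ((j:ℝ)/K))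
      = (1/(K:ℝ)) * ∑ k ∈ s, χ k i * χ k j - ((i:ℝ)/K) * ((j:ℝ)/K) := by
    intro i hi j hj
    rw [hsdef, Finset.mem_Icc] at hi hj
    have hmm : min ((i:ℝ)/K) ((j:ℝ)/K) * max ((i:ℝ)/K) ((j:ℝ)/K)
        = ((i:ℝ)/K)*((j:ℝ)/K) := min_mul_max _ _
    have hsum : ∑ k ∈ s, χ k i * χ k j = ((min i j : ℕ):ℝ) := by
      have h1 : ∀ k, χ k i * χ k j = if k ≤ min i j then (1:ℝ) else 0 := by
        intro k
        by_cases h1 : k ≤ i <;> by_cases h2 : k ≤ j <;>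
          simp [hχdef, h1, h2, Nat.le_min]
      simp only [h1]
      rw [Finset.sum_boole]
      have hfil : s.filter (fun k => k ≤ min i j) = Finset.Icc 1 (min i j) := by
        rw [hsdef]; ext k
        simp only [Finset.mem_filter, Finset.mem_Icc]
        omega
      rw [hfil, Nat.card_Icc]
      simp
    have hmin_div : min ((i:ℝ)/K) ((j:ℝ)/K) = ((min i j : ℕ):ℝ)/K := by
      rw [min_div_div_right hKR.le]
      congr 1
      push_cast
      rfl
    rw [mul_sub, mul_one, hmm, hmin_div, hsum]
    ring
  -- step 1 : LHS = A - B
  have hprod : ∀ i j, ∑ k ∈ s, (w i * χ k i) * (w j * χ k j)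
      = w i * w j * ∑ k ∈ s, χ k i * χ k j := by
    intro i j
    rw [Finset.mul_sum]
    exact Finset.sum_congr rfl fun k _ => by ring
  have step1 : (∑ i ∈ s, ∑ j ∈ s,
        w i * w j * (min ((i:ℝ)/K) ((j:ℝ)/K) * (1 - max ((i:ℝ)/K) ((j:ℝ)/K))))
      = (∑ i ∈ s, ∑ j ∈ s, (1/(K:ℝ)) * ∑ k ∈ s, (w i * χ k i) * (w j * χ k j))
        - ∑ i ∈ s, ∑ j ∈ s, (w i * ((i:ℝ)/K)) * (w j * ((j:ℝ)/K)) := by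
    rw [← Finset.sum_sub_distrib]
    refine Finset.sum_congr rfl fun i hi => ?_
    rw [← Finset.sum_sub_distrib]
    refine Finset.sum_congr rfl fun j hj => ?_
    rw [hmin i hi j hj, hprod i j]
    ring
  -- step 2 : A = (1/K) ∑_k (∑_i w i χ k i)^2
  have step2 : (∑ i ∈ s, ∑ j ∈ s, (1/(K:ℝ)) * ∑ k ∈ s, (w i * χ k i) * (w j * χ k j))
      = (1/(K:ℝ)) * ∑ k ∈ s, (∑ i ∈ s, w i * χ k i)^2 := by
    have e1 : ∀ i, ∑ j ∈ s, (1/(K:ℝ)) * ∑ k ∈ s, (w i * χ k i) * (w j * χ k j)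
        = (1/(K:ℝ)) * ∑ k ∈ s, (w i * χ k i) * (∑ j ∈ s, w j * χ k j) := by
      intro i
      rw [← Finset.mul_sum, Finset.sum_comm]
      congr 1
      exact Finset.sum_congr rfl fun k _ => (Finset.mul_sum _ _ _).symm
    simp only [e1]
    rw [← Finset.mul_sum, Finset.sum_comm]
    congr 1
    refine Finset.sum_congr rfl fun k _ => ?_
    rw [sq, Finset.sum_mul]
  -- step 3 : B = (∑ w τ)^2
  have step3 : (∑ i ∈ s, ∑ j ∈ s, (w i * ((i:ℝ)/K)) * (w j * ((j:ℝ)/K)))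
      = (∑ i ∈ s, w i * ((i:ℝ)/K))^2 := by
    rw [sq, Finset.sum_mul_sum]
  -- step 4 : ∑ w τ = (1/K) ∑ B
  have step4 : ∑ i ∈ s, w i * ((i:ℝ)/K) = (1/(K:ℝ)) * ∑ k ∈ s, B k := by
    calc ∑ i ∈ s, w i * ((i:ℝ)/K)
        = ∑ i ∈ s, (1/(K:ℝ)) * ∑ k ∈ s, w i * χ k i := by
          refine Finset.sum_congr rfl fun i hi => ?_
          rw [← Finset.mul_sum, ← hi_sum i hi]
          ring
      _ = (1/(K:ℝ)) * ∑ i ∈ s, ∑ k ∈ s, w i * χ k i := by rw [← Finset.mul_sum]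
      _ = (1/(K:ℝ)) * ∑ k ∈ s, ∑ i ∈ s, w i * χ k i := by rw [Finset.sum_comm]
      _ = (1/(K:ℝ)) * ∑ k ∈ s, B k := by
          congr 1
          exact Finset.sum_congr rfl ha
  calc (∑ i ∈ s, ∑ j ∈ s, w i * w j *
          (min ((i:ℝ)/K) ((j:ℝ)/K) * (1 - max ((i:ℝ)/K) ((j:ℝ)/K))))
      = (1/(K:ℝ)) * ∑ k ∈ s, (∑ i ∈ s, w i * χ k i)^2
        - (∑ i ∈ s, w i * ((i:ℝ)/K))^2 := by rw [step1, step2, step3]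
    _ = (1/(K:ℝ)) * ∑ k ∈ s, (B k)^2 - ((1/(K:ℝ)) * ∑ k ∈ s, B k)^2 := by
        rw [step4]
        congr 2
        exact Finset.sum_congr rfl fun k hk => by rw [ha k hk]

lemma invFun_F_eq (F : ℝ → ℝ) (hF_range : Set.range F = Set.Ioo (0:ℝ) 1)
    {u : ℝ} (hu : u ∈ Set.Ioo (0:ℝ) 1) : F (Function.invFun F u) = u := by
  apply Function.invFun_eq
  rwa [← hF_range] at hu

lemma G_continuous (f F : ℝ → ℝ) (hf_pos : ∀ x, 0 < f x) (hf_cont : Continuous f)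
    (hF_mono : StrictMono F) (hF_range : Set.range F = Set.Ioo (0:ℝ) 1)
    (hf_top : Tendsto f atTop (𝓝 0)) (hf_bot : Tendsto f atBot (𝓝 0)) :
    Continuous (fun u => if u ∈ Set.Ioo (0:ℝ) 1 then f (Function.invFun F u) else 0) := by
  have hFmem : ∀ x, F x ∈ Set.Ioo (0:ℝ) 1 := by
    intro x
    rw [← hF_range]
    exact ⟨x, rfl⟩
  have hFx : ∀ u ∈ Set.Ioo (0:ℝ) 1, F (Function.invFun F u) = u :=
    fun u hu => invFun_F_eq F hF_range hu
  have hinv_cont : ∀ p ∈ Set.Ioo (0:ℝ) 1, ContinuousAt (Function.invFun F) p := by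
    intro p hp
    rw [Metric.continuousAt_iff]
    intro ε hε
    set x := Function.invFun F p with hxdef
    have hFp : F x = p := hFx p hp
    have h1 : F (x - ε) < p := by rw [← hFp]; exact hF_mono (by linarith)
    have h2 : p < F (x + ε) := by rw [← hFp]; exact hF_mono (by linarith)
    refine ⟨min (min (p - F (x-ε)) (F (x+ε) - p)) (min p (1-p)), by
      have ha := hp.1; have hb := hp.2
      refine lt_min (lt_min (by linarith) (by linarith)) (lt_min (by linarith) (by linarith)), ?_⟩
    intro v hv
    rw [Real.dist_eq] at hv
    have hv1 : F (x-ε) < v := by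
      have := abs_lt.mp hv
      have h3 : min (min (p - F (x-ε)) (F (x+ε) - p)) (min p (1-p)) ≤ p - F (x-ε) :=
        le_trans (min_le_left _ _) (min_le_left _ _)
      linarith [this.1]
    have hv2 : v < F (x+ε) := by
      have := abs_lt.mp hv
      have h3 : min (min (p - F (x-ε)) (F (x+ε) - p)) (min p (1-p)) ≤ F (x+ε) - p :=
        le_trans (min_le_left _ _) (min_le_right _ _)
      linarith [this.2]
    have hv01 : v ∈ Set.Ioo (0:ℝ) 1 := by
      have := abs_lt.mp hv
      have h3 : min (min (p - F (x-ε)) (F (x+ε) - p)) (min p (1-p)) ≤ p :=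
        le_trans (min_le_right _ _) (min_le_left _ _)
      have h4 : min (min (p - F (x-ε)) (F (x+ε) - p)) (min p (1-p)) ≤ 1-p :=
        le_trans (min_le_right _ _) (min_le_right _ _)
      constructor <;> [linarith [this.1]; linarith [this.2]]
    have hFy : F (Function.invFun F v) = v := hFx v hv01
    rw [Real.dist_eq]
    rw [← hFy] at hv1 hv2
    have hy1 : x - ε < Function.invFun F v := hF_mono.lt_iff_lt.mp hv1
    have hy2 : Function.invFun F v < x + ε := hF_mono.lt_iff_lt.mp hv2
    rw [abs_lt]
    constructor <;> [linarith; linarith]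
  rw [continuous_iff_continuousAt]
  intro p
  by_cases hp : p ∈ Set.Ioo (0:ℝ) 1
  · have hev : (fun v => f (Function.invFun F v))
        =ᶠ[𝓝 p] (fun v => if v ∈ Set.Ioo (0:ℝ) 1 then f (Function.invFun F v) else 0) := by
      filter_upwards [isOpen_Ioo.mem_nhds hp] with v hv
      rw [if_pos hv]
    exact (hf_cont.continuousAt.comp (hinv_cont p hp)).congr hev
  · by_cases hp0 : p = 0
    · subst hp0
      rw [Metric.continuousAt_iff]
      intro ε hε
      have h0 : (if (0:ℝ) ∈ Set.Ioo (0:ℝ) 1 then f (Function.invFun F 0) else 0) = 0 := by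
        rw [if_neg (by simp)]
      obtain ⟨b, hb⟩ := eventually_atBot.mp (Metric.tendsto_nhds.mp hf_bot ε hε)
      refine ⟨F b, (hFmem b).1, ?_⟩
      intro v hv
      rw [Real.dist_eq, sub_zero] at hv
      rw [h0]
      by_cases hv01 : v ∈ Set.Ioo (0:ℝ) 1
      · rw [if_pos hv01]
        have hvb : v < F b := lt_of_le_of_lt (le_abs_self v) hv
        rw [← hFx v hv01] at hvb
        have hy : Function.invFun F v < b := hF_mono.lt_iff_lt.mp hvb
        simpa using hb _ hy.le
      · rw [if_neg hv01]
        simpa using hε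
    · by_cases hp1 : p = 1
      · subst hp1
        rw [Metric.continuousAt_iff]
        intro ε hε
        have h0 : (if (1:ℝ) ∈ Set.Ioo (0:ℝ) 1 then f (Function.invFun F 1) else 0) = 0 := by
          rw [if_neg (by simp)]
        obtain ⟨b, hb⟩ := eventually_atTop.mp (Metric.tendsto_nhds.mp hf_top ε hε)
        refine ⟨1 - F b, by linarith [(hFmem b).2], ?_⟩
        intro v hv
        rw [Real.dist_eq] at hv
        rw [h0]
        by_cases hv01 : v ∈ Set.Ioo (0:ℝ) 1
        · rw [if_pos hv01]
          have hvb : F b < v := by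
            have := abs_lt.mp hv
            linarith [this.1]
          rw [← hFx v hv01] at hvb
          have hy : b < Function.invFun F v := hF_mono.lt_iff_lt.mp hvb
          simpa using hb _ hy.le
        · rw [if_neg hv01]
          simpa using hε
      · -- p < 0 or p > 1
        have hout : p < 0 ∨ 1 < p := by
          simp only [Set.mem_Ioo, not_and_or, not_lt] at hp
          have h0 : p ≠ 0 := hp0
          have h1 : p ≠ 1 := hp1
          rcases hp with h | h
          · left; cases lt_or_eq_of_le h with
            | inl h' => exact h'
            | inr h' => exact (h0 h').elim
          · right; cases lt_or_eq_of_le h with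
            | inl h' => exact h'
            | inr h' => exact (h1 h'.symm).elim
        have hev : (fun _ : ℝ => (0:ℝ))
            =ᶠ[𝓝 p] (fun v => if v ∈ Set.Ioo (0:ℝ) 1 then f (Function.invFun F v) else 0) := by
          rcases hout with h | h
          · filter_upwards [Iio_mem_nhds h] with v hv
            rw [if_neg (by simp only [Set.mem_Ioo, not_and_or, not_lt]; left; exact le_of_lt hv)]
          · filter_upwards [Ioi_mem_nhds h] with v hv
            rw [if_neg (by simp only [Set.mem_Ioo, not_and_or, not_lt]; right; exact le_of_lt hv)]
        exact continuousAt_const.congr hev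

lemma c_eq_integral (φ : ℝ → ℝ) (hφ : ContDiff ℝ 1 φ)
    (f F : ℝ → ℝ) (hf_pos : ∀ x, 0 < f x) (hf_smooth : ContDiff ℝ 1 f)
    (hF_mono : StrictMono F) (hF_range : Set.range F = Set.Ioo (0:ℝ) 1)
    (hF_deriv : ∀ x, HasDerivAt F (f x) x)
    (hf_top : Tendsto f atTop (𝓝 0)) (hf_bot : Tendsto f atBot (𝓝 0))
    (hf'_int : Integrable (deriv f)) :
    (∫ u in (0:ℝ)..1, deriv φ u *
        (if u ∈ Set.Ioo (0:ℝ) 1 then f (Function.invFun F u) else 0))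
      = -∫ x : ℝ, φ (F x) * deriv f x := by
  have hF_cont : Continuous F := by
    rw [continuous_iff_continuousAt]
    exact fun x => (hF_deriv x).continuousAt
  set G : ℝ → ℝ := fun u => if u ∈ Set.Ioo (0:ℝ) 1 then f (Function.invFun F u) else 0
    with hGdef
  have hG_cont : Continuous G :=
    G_continuous f F hf_pos hf_smooth.continuous hF_mono hF_range hf_top hf_bot
  have hFmem : ∀ x, F x ∈ Set.Ioo (0:ℝ) 1 := by
    intro x; rw [← hF_range]; exact ⟨x, rfl⟩
  have hGF : ∀ x, G (F x) = f x := by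
    intro x
    rw [hGdef]
    simp only
    rw [if_pos (hFmem x), Function.leftInverse_invFun hF_mono.injective x]
  have hφd : Differentiable ℝ φ := hφ.differentiable one_ne_zero
  have hφ'c : Continuous (deriv φ) := hφ.continuous_deriv le_rfl
  have hfd : Differentiable ℝ f := hf_smooth.differentiable one_ne_zero
  have hf'c : Continuous (deriv f) := hf_smooth.continuous_deriv le_rfl
  set H : ℝ → ℝ := fun u => deriv φ u * G u with hHdef
  have hH_cont : Continuous H := hφ'c.mul hG_cont
  set P : ℝ → ℝ := fun t => ∫ u in (0:ℝ)..t, H u with hPdef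
  have hP_cont : Continuous P :=
    intervalIntegral.continuous_primitive (fun a b => hH_cont.intervalIntegrable a b) 0
  have key : ∀ a b : ℝ, P (F b) - P (F a)
      = φ (F b) * f b - φ (F a) * f a - ∫ x in a..b, φ (F x) * deriv f x := by
    intro a b
    have h1 : P (F b) - P (F a) = ∫ u in (F a)..(F b), H u :=
      intervalIntegral.integral_interval_sub_left
        (hH_cont.intervalIntegrable _ _) (hH_cont.intervalIntegrable _ _)
    have h2 : (∫ x in a..b, f x • H (F x)) = ∫ u in (F a)..(F b), H u :=
      intervalIntegral.integral_comp_smul_deriv (fun x _ => hF_deriv x)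
        hf_smooth.continuous.continuousOn hH_cont
    have h3 : (∫ x in a..b, f x • H (F x))
        = ∫ x in a..b, (deriv φ (F x) * f x) * f x := by
      refine intervalIntegral.integral_congr fun x _ => ?_
      rw [smul_eq_mul, hHdef]
      simp only
      rw [hGF]
      ring
    have hu : ∀ x ∈ Set.uIcc a b, HasDerivAt (fun y => φ (F y)) (deriv φ (F x) * f x) x :=
      fun x _ => ((hφd (F x)).hasDerivAt).comp x (hF_deriv x)
    have hv : ∀ x ∈ Set.uIcc a b, HasDerivAt f (deriv f x) x := fun x _ => (hfd x).hasDerivAt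
    have hibp := intervalIntegral.integral_mul_deriv_eq_deriv_mul hu hv
      (((hφ'c.comp hF_cont).mul hf_smooth.continuous).intervalIntegrable _ _)
      (hf'c.intervalIntegrable _ _)
    rw [h1, ← h2, h3]
    linarith [hibp]
  -- limits
  have hF_top : Tendsto F atTop (𝓝 1) := by
    have hbdd : BddAbove (Set.range F) := hF_range ▸ bddAbove_Ioo
    have h := tendsto_atTop_ciSup hF_mono.monotone hbdd
    have h1 : ⨆ x, F x = 1 := by
      rw [← sSup_range, hF_range]
      exact csSup_Ioo zero_lt_one
    rwa [h1] at h
  have hF_bot : Tendsto F atBot (𝓝 0) := by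
    have hbdd : BddBelow (Set.range F) := hF_range ▸ bddBelow_Ioo
    have h := tendsto_atBot_ciInf hF_mono.monotone hbdd
    have h1 : ⨅ x, F x = 0 := by
      rw [← sInf_range, hF_range]
      exact csInf_Ioo zero_lt_one
    rwa [h1] at h
  have hn_top : Tendsto (fun n : ℕ => (n:ℝ)) atTop atTop := tendsto_natCast_atTop_atTop
  have hn_bot : Tendsto (fun n : ℕ => -(n:ℝ)) atTop atBot :=
    tendsto_neg_atBot_iff.mpr hn_top
  obtain ⟨Mφ, hMφ⟩ := (isCompact_Icc (a := (0:ℝ)) (b := 1)).exists_bound_of_continuousOn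
    hφ.continuous.continuousOn
  have hInt : Integrable (fun x => φ (F x) * deriv f x) := by
    refine Integrable.bdd_mul (c := Mφ) hf'_int ((hφ.continuous.comp hF_cont).aestronglyMeasurable) ?_
    exact Filter.Eventually.of_forall fun x => hMφ (F x) (Set.mem_Icc_of_Ioo (hFmem x))
  have hL : Tendsto (fun n : ℕ => P (F (n:ℝ)) - P (F (-(n:ℝ)))) atTop (𝓝 (P 1 - P 0)) :=
    (((hP_cont.tendsto 1).comp (hF_top.comp hn_top)).sub
      ((hP_cont.tendsto 0).comp (hF_bot.comp hn_bot)))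
  have hR1 : Tendsto (fun n : ℕ => φ (F (n:ℝ)) * f (n:ℝ)) atTop (𝓝 0) := by
    have := (((hφ.continuous.tendsto 1).comp (hF_top.comp hn_top)).mul (hf_top.comp hn_top))
    simpa using this
  have hR2 : Tendsto (fun n : ℕ => φ (F (-(n:ℝ))) * f (-(n:ℝ))) atTop (𝓝 0) := by
    have := (((hφ.continuous.tendsto 0).comp (hF_bot.comp hn_bot)).mul (hf_bot.comp hn_bot))
    simpa using this
  have hR3 : Tendsto (fun n : ℕ => ∫ x in (-(n:ℝ))..(n:ℝ), φ (F x) * deriv f x) atTop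
      (𝓝 (∫ x : ℝ, φ (F x) * deriv f x)) :=
    intervalIntegral_tendsto_integral hInt hn_bot hn_top
  have hR : Tendsto (fun n : ℕ => φ (F (n:ℝ)) * f (n:ℝ) - φ (F (-(n:ℝ))) * f (-(n:ℝ))
      - ∫ x in (-(n:ℝ))..(n:ℝ), φ (F x) * deriv f x) atTop
      (𝓝 (0 - 0 - ∫ x : ℝ, φ (F x) * deriv f x)) := (hR1.sub hR2).sub hR3
  have heq : (fun n : ℕ => P (F (n:ℝ)) - P (F (-(n:ℝ))))
      = (fun n : ℕ => φ (F (n:ℝ)) * f (n:ℝ) - φ (F (-(n:ℝ))) * f (-(n:ℝ))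
        - ∫ x in (-(n:ℝ))..(n:ℝ), φ (F x) * deriv f x) := by
    funext n
    exact key (-(n:ℝ)) (n:ℝ)
  rw [heq] at hL
  have hfinal : P 1 - P 0 = 0 - 0 - ∫ x : ℝ, φ (F x) * deriv f x :=
    tendsto_nhds_unique hL hR
  have hP0 : P 0 = 0 := by
    rw [hPdef]
    simp
  rw [hP0, sub_zero] at hfinal
  rw [hPdef] at hfinal
  simp only at hfinal
  rw [hfinal]
  ring

/-- Proposition 3: with quantile levels `τ_i = i/K` and weights
`w_i = φ(i/K) − φ((i−1)/K)`, the asymptotic variance factor of weighted composite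
quantile regression converges, as `K → ∞`, to the asymptotic variance factor
`1/c_H(φ)²` of generalized rank regression with score-generating function `φ`. -/
theorem cqr_variance_tendsto_grr_variance
    (φ : ℝ → ℝ) (hφ : ContDiff ℝ 1 φ)
    (hφ_mean : (∫ u in (0:ℝ)..1, φ u) = 0)
    (hφ_norm : (∫ u in (0:ℝ)..1, (φ u) ^ 2) = 1)
    (f F : ℝ → ℝ)
    (hf_pos : ∀ x, 0 < f x)
    (hf_bdd : BddAbove (Set.range f))
    (hf_smooth : ContDiff ℝ 1 f)
    (hF_mono : StrictMono F)
    (hF_range : Set.range F = Set.Ioo (0:ℝ) 1)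
    (hF_deriv : ∀ x, HasDerivAt F (f x) x)
    (hf_top : Filter.Tendsto f Filter.atTop (nhds 0))
    (hf_bot : Filter.Tendsto f Filter.atBot (nhds 0))
    (hf'_int : Integrable (deriv f))
    (c : ℝ) (hc_def : c = -∫ x : ℝ, φ (F x) * deriv f x) (hc_pos : 0 < c) :
    Tendsto
      (fun K : ℕ =>
        (∑ i ∈ Finset.Icc 1 (K - 1), ∑ j ∈ Finset.Icc 1 (K - 1),
            (φ ((i : ℝ) / K) - φ (((i : ℝ) - 1) / K)) *
              (φ ((j : ℝ) / K) - φ (((j : ℝ) - 1) / K)) *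
                (min ((i : ℝ) / K) ((j : ℝ) / K) *
                  (1 - max ((i : ℝ) / K) ((j : ℝ) / K)))) /
          (∑ i ∈ Finset.Icc 1 (K - 1),
              (φ ((i : ℝ) / K) - φ (((i : ℝ) - 1) / K)) *
                f (Function.invFun F ((i : ℝ) / K))) ^ 2)
      atTop (nhds (1 / c ^ 2)) := by
  have hφd : Differentiable ℝ φ := hφ.differentiable one_ne_zero
  have hφ'c : Continuous (deriv φ) := hφ.continuous_deriv le_rfl
  set G : ℝ → ℝ := fun u => if u ∈ Set.Ioo (0:ℝ) 1 then f (Function.invFun F u) else 0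
    with hGdef
  have hG_cont : Continuous G :=
    G_continuous f F hf_pos hf_smooth.continuous hF_mono hF_range hf_top hf_bot
  -- index facts
  have hidx : ∀ K i : ℕ, i ∈ Finset.Icc 1 (K-1) →
      1 ≤ i ∧ i ≤ K - 1 ∧ 2 ≤ K ∧ (0:ℝ) < K ∧ (i:ℝ)/K ∈ Set.Ioo (0:ℝ) 1 := by
    intro K i hi
    rw [Finset.mem_Icc] at hi
    have hK2 : 2 ≤ K := by omega
    have hKR : (0:ℝ) < K := by exact_mod_cast (by omega : 0 < K)
    have hiR : (1:ℝ) ≤ (i:ℝ) := by exact_mod_cast hi.1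
    have hiK : (i:ℝ) < (K:ℝ) := by exact_mod_cast (by omega : i < K)
    exact ⟨hi.1, hi.2, hK2, hKR, by positivity, by rw [div_lt_one hKR]; exact hiK⟩
  -- Denominator convergence
  have hD : Tendsto (fun K : ℕ => ∑ i ∈ Finset.Icc 1 (K - 1),
      (φ ((i : ℝ) / K) - φ (((i : ℝ) - 1) / K)) * f (Function.invFun F ((i : ℝ) / K)))
      atTop (𝓝 c) := by
    have hRS := riemann_tagged_tendsto (deriv φ) G hφ'c hG_cont
      (fun K i => (i:ℝ)/K)
      (by
        intro K i hi
        obtain ⟨h1, h2, hK2, hKR, hIoo⟩ := hidx K i hi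
        constructor
        · show ((i:ℝ)-1)/(K:ℝ) ≤ (i:ℝ)/(K:ℝ)
          gcongr
          linarith
        · show (i:ℝ)/(K:ℝ) ≤ (i:ℝ)/(K:ℝ)
          exact le_refl _)
    have hval : (∫ u in (0:ℝ)..1, deriv φ u * G u) = c := by
      rw [hGdef, c_eq_integral φ hφ f F hf_pos hf_smooth hF_mono hF_range hF_deriv
        hf_top hf_bot hf'_int, ← hc_def]
    rw [hval] at hRS
    refine hRS.congr fun K => ?_
    refine Finset.sum_congr rfl fun i hi => ?_
    obtain ⟨h1, h2, hK2, hKR, hIoo⟩ := hidx K i hi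
    have hw : (∫ u in (((i:ℝ)-1)/K)..((i:ℝ)/K), deriv φ u)
        = φ ((i:ℝ)/K) - φ (((i:ℝ)-1)/K) :=
      intervalIntegral.integral_deriv_eq_sub' φ rfl (fun x _ => hφd x) hφ'c.continuousOn
    rw [hw, hGdef]
    simp only
    rw [if_pos hIoo]
  -- auxiliary limits for the numerator
  have h1K : Tendsto (fun K : ℕ => 1/(K:ℝ)) atTop (𝓝 0) := tendsto_one_div_atTop_nhds_zero_nat
  have hθ : Tendsto (fun K : ℕ => ((K-1:ℕ):ℝ)/K) atTop (𝓝 1) := by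
    have h : Tendsto (fun K : ℕ => 1 - 1/(K:ℝ)) atTop (𝓝 (1 - 0)) :=
      tendsto_const_nhds.sub h1K
    rw [sub_zero] at h
    refine h.congr' ?_
    filter_upwards [eventually_ge_atTop 1] with K hK
    have hKR : (0:ℝ) < K := by exact_mod_cast (by omega : 0 < K)
    rw [Nat.cast_sub hK]
    field_simp
    simp
  have hφθ : Tendsto (fun K : ℕ => φ (((K-1:ℕ):ℝ)/K)) atTop (𝓝 (φ 1)) :=
    (hφ.continuous.tendsto 1).comp hθ
  have hS1 : Tendsto (fun K : ℕ => (1/(K:ℝ)) * ∑ k ∈ Finset.Icc 1 (K-1),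
      φ (((k:ℝ)-1)/K)) atTop (𝓝 0) := by
    have hRS := riemann_tagged_tendsto (fun _ => (1:ℝ)) φ continuous_const hφ.continuous
      (fun K k => ((k:ℝ)-1)/K)
      (by
        intro K i hi
        obtain ⟨h1, h2, hK2, hKR, hIoo⟩ := hidx K i hi
        constructor
        · show ((i:ℝ)-1)/(K:ℝ) ≤ ((i:ℝ)-1)/(K:ℝ)
          exact le_refl _
        · show ((i:ℝ)-1)/(K:ℝ) ≤ (i:ℝ)/(K:ℝ)
          gcongr
          linarith)
    have hval : (∫ u in (0:ℝ)..1, (1:ℝ) * φ u) = 0 := by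
      simp only [one_mul]
      exact hφ_mean
    rw [hval] at hRS
    refine hRS.congr fun K => ?_
    rw [Finset.mul_sum]
    refine Finset.sum_congr rfl fun k hk => ?_
    obtain ⟨h1, h2, hK2, hKR, hIoo⟩ := hidx K k hk
    have hone : (∫ _ in (((k:ℝ)-1)/K)..((k:ℝ)/K), (1:ℝ)) = 1/(K:ℝ) := by
      rw [_root_.integral_one]
      field_simp
      ring
    show (∫ _ in (((k:ℝ)-1)/K)..((k:ℝ)/K), (1:ℝ)) * φ (((k:ℝ)-1)/K)
        = 1/(K:ℝ) * φ (((k:ℝ)-1)/K)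
    rw [hone]
  have hS2 : Tendsto (fun K : ℕ => (1/(K:ℝ)) * ∑ k ∈ Finset.Icc 1 (K-1),
      (φ (((k:ℝ)-1)/K))^2) atTop (𝓝 1) := by
    have hRS := riemann_tagged_tendsto (fun _ => (1:ℝ)) (fun u => (φ u)^2) continuous_const
      (hφ.continuous.pow 2)
      (fun K k => ((k:ℝ)-1)/K)
      (by
        intro K i hi
        obtain ⟨h1, h2, hK2, hKR, hIoo⟩ := hidx K i hi
        constructor
        · show ((i:ℝ)-1)/(K:ℝ) ≤ ((i:ℝ)-1)/(K:ℝ)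
          exact le_refl _
        · show ((i:ℝ)-1)/(K:ℝ) ≤ (i:ℝ)/(K:ℝ)
          gcongr
          linarith)
    have hval : (∫ u in (0:ℝ)..1, (1:ℝ) * (φ u)^2) = 1 := by
      simp only [one_mul]
      exact hφ_norm
    rw [hval] at hRS
    refine hRS.congr fun K => ?_
    rw [Finset.mul_sum]
    refine Finset.sum_congr rfl fun k hk => ?_
    obtain ⟨h1, h2, hK2, hKR, hIoo⟩ := hidx K k hk
    have hone : (∫ _ in (((k:ℝ)-1)/K)..((k:ℝ)/K), (1:ℝ)) = 1/(K:ℝ) := by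
      rw [_root_.integral_one]
      field_simp
      ring
    show (∫ _ in (((k:ℝ)-1)/K)..((k:ℝ)/K), (1:ℝ)) * (φ (((k:ℝ)-1)/K))^2
        = 1/(K:ℝ) * (φ (((k:ℝ)-1)/K))^2
    rw [hone]
  -- expansion of the B-sums
  have expand : ∀ K : ℕ,
      (1/(K:ℝ)) * (∑ k ∈ Finset.Icc 1 (K-1),
        (φ (((K-1:ℕ):ℝ)/K) - φ (((k:ℝ)-1)/K))^2)
      - ((1/(K:ℝ)) * ∑ k ∈ Finset.Icc 1 (K-1),
        (φ (((K-1:ℕ):ℝ)/K) - φ (((k:ℝ)-1)/K)))^2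
      = (((K-1:ℕ):ℝ)/K) * (φ (((K-1:ℕ):ℝ)/K))^2
        - 2 * φ (((K-1:ℕ):ℝ)/K) * ((1/(K:ℝ)) * ∑ k ∈ Finset.Icc 1 (K-1), φ (((k:ℝ)-1)/K))
        + ((1/(K:ℝ)) * ∑ k ∈ Finset.Icc 1 (K-1), (φ (((k:ℝ)-1)/K))^2)
        - ((((K-1:ℕ):ℝ)/K) * φ (((K-1:ℕ):ℝ)/K)
            - (1/(K:ℝ)) * ∑ k ∈ Finset.Icc 1 (K-1), φ (((k:ℝ)-1)/K))^2 := by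
    intro K
    set C := φ (((K-1:ℕ):ℝ)/K)
    have hcard : ((Finset.Icc 1 (K-1)).card : ℝ) = ((K-1:ℕ):ℝ) := by
      rw [Nat.card_Icc]
      norm_cast
    have e1 : ∑ k ∈ Finset.Icc 1 (K-1), (C - φ (((k:ℝ)-1)/K))
        = ((K-1:ℕ):ℝ) * C - ∑ k ∈ Finset.Icc 1 (K-1), φ (((k:ℝ)-1)/K) := by
      rw [Finset.sum_sub_distrib, Finset.sum_const, nsmul_eq_mul, hcard]
    have e2 : ∑ k ∈ Finset.Icc 1 (K-1), (C - φ (((k:ℝ)-1)/K))^2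
        = ((K-1:ℕ):ℝ) * C^2 - 2*C*(∑ k ∈ Finset.Icc 1 (K-1), φ (((k:ℝ)-1)/K))
          + ∑ k ∈ Finset.Icc 1 (K-1), (φ (((k:ℝ)-1)/K))^2 := by
      have : ∀ k ∈ Finset.Icc 1 (K-1), (C - φ (((k:ℝ)-1)/K))^2
          = C^2 - 2*C*φ (((k:ℝ)-1)/K) + (φ (((k:ℝ)-1)/K))^2 := fun k _ => by ring
      rw [Finset.sum_congr rfl this, Finset.sum_add_distrib, Finset.sum_sub_distrib,
        Finset.sum_const, nsmul_eq_mul, hcard, ← Finset.mul_sum]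
    rw [e1, e2]
    ring
  -- numerator convergence
  have hN : Tendsto (fun K : ℕ =>
      ∑ i ∈ Finset.Icc 1 (K - 1), ∑ j ∈ Finset.Icc 1 (K - 1),
        (φ ((i : ℝ) / K) - φ (((i : ℝ) - 1) / K)) *
          (φ ((j : ℝ) / K) - φ (((j : ℝ) - 1) / K)) *
            (min ((i : ℝ) / K) ((j : ℝ) / K) *
              (1 - max ((i : ℝ) / K) ((j : ℝ) / K)))) atTop (𝓝 1) := by
    have hE : Tendsto (fun K : ℕ =>
        (((K-1:ℕ):ℝ)/K) * (φ (((K-1:ℕ):ℝ)/K))^2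
        - 2 * φ (((K-1:ℕ):ℝ)/K) * ((1/(K:ℝ)) * ∑ k ∈ Finset.Icc 1 (K-1), φ (((k:ℝ)-1)/K))
        + ((1/(K:ℝ)) * ∑ k ∈ Finset.Icc 1 (K-1), (φ (((k:ℝ)-1)/K))^2)
        - ((((K-1:ℕ):ℝ)/K) * φ (((K-1:ℕ):ℝ)/K)
            - (1/(K:ℝ)) * ∑ k ∈ Finset.Icc 1 (K-1), φ (((k:ℝ)-1)/K))^2) atTop
        (𝓝 (1 * (φ 1)^2 - 2 * φ 1 * 0 + 1 - (1 * φ 1 - 0)^2)) :=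
      (((hθ.mul (hφθ.pow 2)).sub
          (((tendsto_const_nhds (x := (2:ℝ))).mul hφθ).mul hS1)).add hS2).sub
        (((hθ.mul hφθ).sub hS1).pow 2)
    have hone : (1 * (φ 1)^2 - 2 * φ 1 * 0 + 1 - (1 * φ 1 - 0)^2) = 1 := by ring
    rw [hone] at hE
    refine hE.congr fun K => ?_
    rw [← expand K, ← num_identity φ K]
  exact hN.div (hD.pow 2) (pow_ne_zero 2 (ne_of_gt hc_pos))
end

section
/- Let e_1,…,e_n be distinct real numbers with order statistics e_{(1)} < ⋯ < e_{(n)}, let k₀ ∈ {1,…,n}, and set τ = (k₀−1)/n. Define the check loss ρ_τ(u) = u·(τ − 1{u < 0}). Then for every b ∈ ℝ, Σ_{i=1}^n ρ_τ(e_i − b) ≥ Σ_{i=1}^n (τ − 1{i < k₀})·e_{(i)}, with equality at b = e_{(k₀)}. Consequently, min_{b∈ℝ} Σ_{i=1}^n ρ_τ(e_i − b) = Σ_{i=1}^n (τ − 1{i < k₀})·e_{(i)}. -/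
/-- Remark 4: profiling out the intercept in the quantile-regression check loss at
level `τ = (k₀−1)/n` yields the single-level rank regression objective
`Σᵢ (τ − 1{i < k₀}) e₍ᵢ₎`, with the minimum attained at `b = e₍k₀₎`. -/
theorem qr_profile_eq_srr {n : ℕ} (hn : 1 ≤ n) (e : Fin n → ℝ)
    (he : Function.Injective e) (k₀ : ℕ) (hk₀ : 1 ≤ k₀) (hk₀n : k₀ ≤ n) :
    let τ : ℝ := ((k₀ : ℝ) - 1) / n
    let es : Fin n → ℝ := e ∘ Tuple.sort e
    let SRR : ℝ := ∑ i : Fin n, (τ - if (i : ℕ) + 1 < k₀ then 1 else 0) * es i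
    (∀ b : ℝ,
        SRR ≤ ∑ i : Fin n, (e i - b) * (τ - if e i - b < 0 then 1 else 0)) ∧
    (∑ i : Fin n,
        (e i - es ⟨k₀ - 1, by omega⟩) *
          (τ - if e i - es ⟨k₀ - 1, by omega⟩ < 0 then 1 else 0) = SRR) ∧
    IsLeast
      {s : ℝ | ∃ b : ℝ,
        s = ∑ i : Fin n, (e i - b) * (τ - if e i - b < 0 then 1 else 0)} SRR := by
  intro τ es SRR
  have hn0 : (n : ℝ) ≠ 0 := Nat.cast_ne_zero.mpr (by omega)
  -- sum of indicators c i
  have hsumc : ∑ i : Fin n, (if (i : ℕ) + 1 < k₀ then (1:ℝ) else 0) = (k₀ : ℝ) - 1 := by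
    rw [Fin.sum_univ_eq_sum_range (fun i => if i + 1 < k₀ then (1:ℝ) else 0)]
    rw [Finset.sum_boole]
    have : Finset.filter (fun i => i + 1 < k₀) (Finset.range n) = Finset.range (k₀ - 1) := by
      ext i; simp; omega
    rw [this, Finset.card_range]
    push_cast [Nat.cast_sub hk₀]
    ring
  have hsumτc : ∑ i : Fin n, (τ - if (i : ℕ) + 1 < k₀ then (1:ℝ) else 0) = 0 := by
    rw [Finset.sum_sub_distrib, hsumc, Finset.sum_const, Finset.card_univ, Fintype.card_fin]
    simp only [nsmul_eq_mul, τ]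
    field_simp
    ring
  -- reindexing by the sorting permutation
  have hre : ∀ f : ℝ → ℝ, ∑ i : Fin n, f (e i) = ∑ i : Fin n, f (es i) :=
    fun f => (Equiv.sum_comp (Tuple.sort e) (fun j => f (e j))).symm
  -- key decomposition
  have key : ∀ b : ℝ, ∑ i : Fin n, (e i - b) * (τ - if e i - b < 0 then 1 else 0)
      = SRR + ∑ i : Fin n, (es i - b) *
          ((if (i : ℕ) + 1 < k₀ then (1:ℝ) else 0) - (if es i - b < 0 then 1 else 0)) := by
    intro b
    have h1 : ∑ i : Fin n, (e i - b) * (τ - if e i - b < 0 then 1 else 0)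
        = ∑ i : Fin n, (es i - b) * (τ - if es i - b < 0 then 1 else 0) :=
      hre (fun x => (x - b) * (τ - if x - b < 0 then 1 else 0))
    rw [h1]
    have h2 : ∀ i : Fin n, (es i - b) * (τ - if es i - b < 0 then 1 else 0)
        = (τ - if (i : ℕ) + 1 < k₀ then (1:ℝ) else 0) * es i
          - b * (τ - if (i : ℕ) + 1 < k₀ then (1:ℝ) else 0)
          + (es i - b) * ((if (i : ℕ) + 1 < k₀ then (1:ℝ) else 0)
              - (if es i - b < 0 then 1 else 0)) := by
      intro i; ring
    rw [Finset.sum_congr rfl (fun i _ => h2 i)]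
    rw [Finset.sum_add_distrib, Finset.sum_sub_distrib, ← Finset.mul_sum, hsumτc]
    simp [SRR]
  -- each correction term is nonnegative
  have hterm : ∀ (b : ℝ) (i : Fin n),
      0 ≤ (es i - b) * ((if (i : ℕ) + 1 < k₀ then (1:ℝ) else 0) - (if es i - b < 0 then 1 else 0)) := by
    intro b i
    by_cases h1 : (i : ℕ) + 1 < k₀ <;> by_cases h2 : es i - b < 0 <;>
      simp [h1, h2] <;> nlinarith [h2]
  have hineq : ∀ b : ℝ, SRR ≤ ∑ i : Fin n, (e i - b) * (τ - if e i - b < 0 then 1 else 0) := by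
    intro b
    rw [key b]
    have : 0 ≤ ∑ i : Fin n, (es i - b) *
        ((if (i : ℕ) + 1 < k₀ then (1:ℝ) else 0) - (if es i - b < 0 then 1 else 0)) :=
      Finset.sum_nonneg (fun i _ => hterm b i)
    linarith
  -- strict monotonicity of es
  have hsm : StrictMono es :=
    (Tuple.monotone_sort e).strictMono_of_injective (he.comp (Tuple.sort e).injective)
  have heq : ∑ i : Fin n,
      (e i - es ⟨k₀ - 1, by omega⟩) *
        (τ - if e i - es ⟨k₀ - 1, by omega⟩ < 0 then 1 else 0) = SRR := by
    rw [key (es ⟨k₀ - 1, by omega⟩)]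
    have hz : ∀ i : Fin n, (es i - es ⟨k₀ - 1, by omega⟩) *
        ((if (i : ℕ) + 1 < k₀ then (1:ℝ) else 0)
          - (if es i - es ⟨k₀ - 1, by omega⟩ < 0 then 1 else 0)) = 0 := by
      intro i
      have hiff : es i - es ⟨k₀ - 1, by omega⟩ < 0 ↔ (i : ℕ) + 1 < k₀ := by
        rw [sub_neg, hsm.lt_iff_lt, Fin.lt_def]
        simp; omega
      by_cases h1 : (i : ℕ) + 1 < k₀
      · simp [h1, hiff.mpr h1]
      · have h2 : ¬ es i - es ⟨k₀ - 1, by omega⟩ < 0 := fun h => h1 (hiff.mp h)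
        simp [h1, h2]
    rw [Finset.sum_congr rfl (fun i _ => hz i), Finset.sum_const_zero, add_zero]
  refine ⟨hineq, heq, ⟨⟨es ⟨k₀ - 1, by omega⟩, heq.symm⟩, ?_⟩⟩
  rintro s ⟨b, rfl⟩
  exact hineq b
end

section
/- Let e_1 < e_2 < ⋯ < e_n be real numbers, let w_1,…,w_n ∈ ℝ be arbitrary weights, set τ_k = k/n for k = 1,…,n, and define the check loss ρ_τ(u) = u·(τ − 1{u ≤ 0}). Then Σ_{k=1}^n Σ_{i=1}^n w_k · ρ_{τ_k}(e_i − e_k) = Σ_{i=1}^n a(i)·e_i, where a(i) = Σ_{k=1}^n w_k τ_k − Σ_{k=i}^n w_k. -/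
/-- Equation (score_weight) of Remark 5: the weighted composite quantile regression
loss with `K = n` quantile levels `τ_k = k/n`, evaluated with the intercepts replaced
by the (already sorted) residuals `e₁ < ⋯ < eₙ`, equals the GRR loss
`Σᵢ a(i) eᵢ` with score `a(i) = Σₖ wₖ τₖ − Σ_{k≥i} wₖ`.  (Indices are 0-based in
`Fin n`, so the 1-based level `τ_k = k/n` becomes `((k:ℝ)+1)/n`.) -/
theorem wcqr_loss_eq_grr_loss {n : ℕ} (e : Fin n → ℝ) (he : StrictMono e)
    (w : Fin n → ℝ) :
    (∑ k : Fin n, ∑ i : Fin n,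
        w k * ((e i - e k) *
          (((k : ℝ) + 1) / n - if e i - e k ≤ 0 then 1 else 0)))
      = ∑ i : Fin n,
          ((∑ k : Fin n, w k * (((k : ℝ) + 1) / n)) - ∑ k ∈ Finset.Ici i, w k) * e i := by
  rcases Nat.eq_zero_or_pos n with h0 | hn
  · subst h0; simp
  have hn' : (n : ℝ) ≠ 0 := Nat.cast_ne_zero.mpr hn.ne'
  have hiff : ∀ i k : Fin n, (e i - e k ≤ 0) ↔ i ≤ k := by
    intro i k; rw [sub_nonpos, he.le_iff_le]
  -- rewrite RHS as a double sum over k then i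
  have hRHS : (∑ i : Fin n,
      ((∑ k : Fin n, w k * (((k : ℝ) + 1) / n)) - ∑ k ∈ Finset.Ici i, w k) * e i)
      = ∑ k : Fin n, ∑ i : Fin n,
          (w k * (((k : ℝ) + 1) / n) * e i - (if i ≤ k then w k * e i else 0)) := by
    rw [Finset.sum_comm]
    refine Finset.sum_congr rfl fun i _ => ?_
    rw [Finset.sum_sub_distrib, sub_mul, Finset.sum_mul, Finset.sum_mul]
    congr 1
    rw [← Finset.sum_filter]
    congr 1
    ext x
    simp [Finset.mem_Ici]
  rw [hRHS]
  refine Finset.sum_congr rfl fun k _ => ?_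
  have hcard : (∑ i : Fin n, (if i ≤ k then (1:ℝ) else 0)) = (k : ℝ) + 1 := by
    rw [Finset.sum_boole]
    have : (Finset.univ.filter (fun i : Fin n => i ≤ k)) = Finset.Iic k := by
      ext i; simp
    rw [this, Fin.card_Iic]
    push_cast
    ring
  have hsplit : ∀ i : Fin n,
      w k * ((e i - e k) * (((k : ℝ) + 1) / n - if e i - e k ≤ 0 then 1 else 0))
      = (w k * (((k : ℝ) + 1) / n) * e i - (if i ≤ k then w k * e i else 0))
        - w k * (((k : ℝ) + 1) / n) * e k
        + w k * e k * (if i ≤ k then (1:ℝ) else 0) := by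
    intro i
    simp only [hiff]
    by_cases h : i ≤ k <;> simp [h] <;> ring
  calc (∑ i : Fin n, w k * ((e i - e k) *
          (((k : ℝ) + 1) / n - if e i - e k ≤ 0 then 1 else 0)))
      = ∑ i : Fin n,
          ((w k * (((k : ℝ) + 1) / n) * e i - (if i ≤ k then w k * e i else 0))
            - w k * (((k : ℝ) + 1) / n) * e k
            + w k * e k * (if i ≤ k then (1:ℝ) else 0)) := by
        exact Finset.sum_congr rfl fun i _ => hsplit i
    _ = (∑ i : Fin n, (w k * (((k : ℝ) + 1) / n) * e i - (if i ≤ k then w k * e i else 0)))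
          - (n : ℝ) * (w k * (((k : ℝ) + 1) / n) * e k)
          + w k * e k * (((k : ℝ) + 1)) := by
        rw [Finset.sum_add_distrib, Finset.sum_sub_distrib, Finset.sum_const,
          ← Finset.mul_sum, hcard]
        simp [nsmul_eq_mul]
    _ = ∑ i : Fin n, (w k * (((k : ℝ) + 1) / n) * e i - (if i ≤ k then w k * e i else 0)) := by
        field_simp
        ring
end
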